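/- arXiv:2402.11556 — 3 statements merged into one kernel-verified Lean document; each statement's English description precedes it below -/
import Mathlib

section
/- Let K be a simplicial complex on [m] = {1,…,m} and let G_1,…,G_m be groups. Let P denote the quotient of the free product G_1 ∗ ⋯ ∗ G_m by the normal closure of all commutators g_i⁻¹g_j⁻¹g_ig_j with g_i ∈ G_i, g_j ∈ G_j and {i,j} an edge of K, and for each face I ∈ K let φ_I : ∏_{i∈I} G_i → P be the homomorphism sending an element (g_i)_{i∈I} to the product of the images of its coordinates under the canonical maps G_i → P. Then (P, (φ_I)_{I∈K}) is a colimit of the diagram over the face poset of K that assigns to a face I the group ∏_{i∈I} G_i and to an inclusion I ⊆ J the homomorphism ∏_{i∈I} G_i → ∏_{j∈J} G_j extending by identity elements; that is, for every group H and every family of homomorphisms ψ_I : ∏_{i∈I} G_i → H (I ∈ K) compatible with these inclusion maps, there exists a unique homomorphism h : P → H with h ∘ φ_I = ψ_I for all I ∈ K. -/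
open Monoid

/-- The set of commutator relators `g_i⁻¹ g_j⁻¹ g_i g_j` for edges `{i,j}` of `K`. -/
def graphRels {m : ℕ} (K : Set (Finset (Fin m))) (G : Fin m → Type) [∀ i, Group (G i)] :
    Set (CoprodI G) :=
  {x | ∃ (i j : Fin m) (gi : G i) (gj : G j), i ≠ j ∧ ({i, j} : Finset (Fin m)) ∈ K ∧
    x = (CoprodI.of gi)⁻¹ * (CoprodI.of gj)⁻¹ * CoprodI.of gi * CoprodI.of gj}

/-- The graph product of groups: the quotient of the free product by the normal closure
of the commutators corresponding to edges of `K`. -/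
def GraphProduct {m : ℕ} (K : Set (Finset (Fin m))) (G : Fin m → Type) [∀ i, Group (G i)] :
    Type :=
  CoprodI G ⧸ Subgroup.normalClosure (graphRels K G)

instance {m : ℕ} (K : Set (Finset (Fin m))) (G : Fin m → Type) [∀ i, Group (G i)] :
    Group (GraphProduct K G) :=
  inferInstanceAs (Group (CoprodI G ⧸ Subgroup.normalClosure (graphRels K G)))

/-- The canonical homomorphism `G i → GraphProduct K G`. -/
def graphInj {m : ℕ} (K : Set (Finset (Fin m))) (G : Fin m → Type) [∀ i, Group (G i)]
    (i : Fin m) : G i →* GraphProduct K G :=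
  (QuotientGroup.mk' (Subgroup.normalClosure (graphRels K G))).comp CoprodI.of

/-- For `I ⊆ J`, the homomorphism `∏_{i∈I} G i → ∏_{j∈J} G j` extending by identity elements. -/
def extendHom {m : ℕ} (G : Fin m → Type) [∀ i, Group (G i)] {I J : Finset (Fin m)}
    (h : I ⊆ J) : ((i : I) → G i) →* ((j : J) → G j) where
  toFun g j := if hj : j.val ∈ I then g ⟨j.val, hj⟩ else 1
  map_one' := by funext j; dsimp; split <;> rfl
  map_mul' x y := by funext j; dsimp; split <;> simp

lemma extendHom_mulSingle {m : ℕ} (G : Fin m → Type) [∀ i, Group (G i)]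
    {I J : Finset (Fin m)} (h : I ⊆ J) (i : I) (g : G i.val) :
    extendHom G h (MonoidHom.mulSingle (fun j : I => G j.val) i g)
      = MonoidHom.mulSingle (fun j : J => G j.val) ⟨i.val, h i.2⟩ g := by
  classical
  funext j
  simp only [extendHom, MonoidHom.coe_mk, OneHom.coe_mk, MonoidHom.mulSingle_apply]
  obtain ⟨iv, hiv⟩ := i
  obtain ⟨jv, hjv⟩ := j
  dsimp only at *
  by_cases hji : jv = iv
  · subst hji
    rw [dif_pos hiv]
    exact (Pi.mulSingle_eq_same (M := fun j : I => G j.val) ⟨jv, hiv⟩ g).trans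
      (Pi.mulSingle_eq_same (M := fun j : J => G j.val) ⟨jv, h hiv⟩ g).symm
  · have e2 : (⟨jv, hjv⟩ : J) ≠ ⟨iv, h hiv⟩ := fun hc => hji (congrArg Subtype.val hc)
    rw [Pi.mulSingle_eq_of_ne e2]
    split
    · next hj =>
      exact Pi.mulSingle_eq_of_ne (M := fun j : I => G j.val)
        (fun hc => hji (congrArg Subtype.val hc) : (⟨jv, hj⟩ : I) ≠ ⟨iv, hiv⟩) g
    · rfl

/-- Let `K` be a simplicial complex on `[m]` and `G_1, …, G_m` groups.
Let `P` be the graph product (the quotient of the free product by the normal closure of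
the edge commutators), and for each face `I ∈ K` let `φ I : ∏_{i ∈ I} G i →* P` be the
homomorphism sending an element to the product of the images of its coordinates under the
canonical maps `G i → P` (equivalently, the homomorphism agreeing with the canonical maps
on single-coordinate elements).  Then `(P, φ)` is a colimit of the diagram over the face
poset of `K` assigning `I ↦ ∏_{i ∈ I} G i`, with structure maps extending by identity. -/
theorem graphProduct_isColimit {m : ℕ} (K : Set (Finset (Fin m)))
    (hdown : ∀ I ∈ K, ∀ J ⊆ I, J ∈ K) (hempty : ∅ ∈ K)
    (hsingle : ∀ i : Fin m, ({i} : Finset (Fin m)) ∈ K)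
    (G : Fin m → Type) [∀ i, Group (G i)]
    (φ : (I : Finset (Fin m)) → I ∈ K → (((i : I) → G i.val) →* GraphProduct K G))
    (hφ : ∀ (I : Finset (Fin m)) (hI : I ∈ K) (i : I) (g : G i.val),
      φ I hI (MonoidHom.mulSingle (fun i : I => G i.val) i g) = graphInj K G i.val g)
    (H : Type) [Group H]
    (ψ : (I : Finset (Fin m)) → I ∈ K → (((i : I) → G i.val) →* H))
    (hψ : ∀ (I J : Finset (Fin m)) (hI : I ∈ K) (hJ : J ∈ K) (hIJ : I ⊆ J),
      (ψ J hJ).comp (extendHom G hIJ) = ψ I hI) :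
    ∃! h : GraphProduct K G →* H,
      ∀ (I : Finset (Fin m)) (hI : I ∈ K), h.comp (φ I hI) = ψ I hI := by
  classical
  -- For each `i`, the map `G i →* H` obtained from `ψ {i}`.
  have mem_self : ∀ i : Fin m, i ∈ ({i} : Finset (Fin m)) := fun i => Finset.mem_singleton_self i
  let k : ∀ i : Fin m, G i →* H := fun i =>
    (ψ {i} (hsingle i)).comp
      (MonoidHom.mulSingle (fun j : ({i} : Finset (Fin m)) => G j.val) ⟨i, mem_self i⟩)
  have hk : ∀ (i : Fin m) (g : G i), k i g =
      ψ {i} (hsingle i)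
        (MonoidHom.mulSingle (fun j : ({i} : Finset (Fin m)) => G j.val) ⟨i, mem_self i⟩ g) :=
    fun i g => rfl
  -- `k` factors through any face containing `i`.
  have hkI : ∀ (I : Finset (Fin m)) (hI : I ∈ K) (i : I) (g : G i.val),
      ψ I hI (MonoidHom.mulSingle (fun j : I => G j.val) i g) = k i.val g := by
    intro I hI i g
    have hsub : ({i.val} : Finset (Fin m)) ⊆ I := Finset.singleton_subset_iff.mpr i.2
    have := hψ {i.val} I (hsingle i.val) hI hsub
    have h2 := congrArg (fun f => f
      (MonoidHom.mulSingle (fun j : ({i.val} : Finset (Fin m)) => G j.val)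
        ⟨i.val, mem_self i.val⟩ g)) this
    simp only [MonoidHom.comp_apply] at h2
    rw [hk, ← h2, extendHom_mulSingle]
  -- commutation of `k i` and `k j` for edges
  have hcomm : ∀ (i j : Fin m), i ≠ j → ({i, j} : Finset (Fin m)) ∈ K →
      ∀ (gi : G i) (gj : G j), Commute (k i gi) (k j gj) := by
    intro i j hij hK gi gj
    have hi : i ∈ ({i, j} : Finset (Fin m)) := by simp
    have hj : j ∈ ({i, j} : Finset (Fin m)) := by simp
    have h1 := hkI {i, j} hK ⟨i, hi⟩ gi
    have h2 := hkI {i, j} hK ⟨j, hj⟩ gj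
    rw [← h1, ← h2]
    have hne : (⟨i, hi⟩ : ({i, j} : Finset (Fin m))) ≠ ⟨j, hj⟩ := by
      intro h; exact hij (congrArg Subtype.val h)
    exact (Pi.mulSingle_commute hne gi gj).map (ψ {i, j} hK)
  -- the lift from the free product kills the relators
  let f : CoprodI G →* H := CoprodI.lift k
  have hker : Subgroup.normalClosure (graphRels K G) ≤ f.ker := by
    apply Subgroup.normalClosure_le_normal
    rintro x ⟨i, j, gi, gj, hij, hK, rfl⟩
    have hc := hcomm i j hij hK gi gj
    simp only [SetLike.mem_coe, MonoidHom.mem_ker, map_mul, map_inv, CoprodI.lift_of, f]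
    rw [mul_assoc, hc.eq]
    group
  let h : GraphProduct K G →* H := QuotientGroup.lift _ f hker
  have hinj : ∀ (i : Fin m) (g : G i), h (graphInj K G i g) = k i g := by
    intro i g
    show f (CoprodI.of g) = k i g
    simp [f]
  refine ⟨h, ?_, ?_⟩
  · intro I hI
    refine MonoidHom.pi_ext fun i g => ?_
    simp only [MonoidHom.comp_apply]
    exact (congrArg h (hφ I hI i g)).trans ((hinj i.val g).trans (hkI I hI i g).symm)
  · intro h' hh'
    apply QuotientGroup.monoidHom_ext
    apply CoprodI.ext_hom
    intro i
    ext g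
    have e1 : (QuotientGroup.mk' (Subgroup.normalClosure (graphRels K G))) (CoprodI.of g)
        = graphInj K G i g := rfl
    simp only [MonoidHom.comp_apply, e1]
    have h1 := congrArg (fun f => f
      (MonoidHom.mulSingle (fun j : ({i} : Finset (Fin m)) => G j.val) ⟨i, mem_self i⟩ g))
      (hh' {i} (hsingle i))
    simp only [MonoidHom.comp_apply] at h1
    rw [hφ {i} (hsingle i) ⟨i, mem_self i⟩ g] at h1
    exact h1.trans (hinj i g).symm
end

section
/- Let R be a commutative ring with unit, I a set, rels a set of elements of the free group F(a_i : i ∈ I), and G = F(a_i : i ∈ I)/⟨⟨rels⟩⟩ the corresponding presented group. For a word w in the free group, let W(w) denote the monomial in the free associative R-algebra T_R(x_i, y_i : i ∈ I) obtained by replacing each letter a_i in the reduced form of w by x_i and each letter a_i⁻¹ by y_i. Then the group algebra R[G] is isomorphic, as an R-algebra, to the quotient of T_R(x_i, y_i : i ∈ I) by the two-sided ideal generated by the elements x_i y_i − 1 and y_i x_i − 1 for i ∈ I together with the elements W(r) − 1 for r ∈ rels, via the isomorphism sending the basis element of R[G] corresponding to the image of the generator a_i to the class of x_i. -/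
variable (R : Type) [CommRing R]

/-- The monomial `W(w)` in the free associative algebra on generators `x_i = inl i`,
`y_i = inr i` obtained by replacing, in the reduced word of `w`, each letter `a_i` by
`x_i` and each letter `a_i⁻¹` by `y_i`. -/
noncomputable def wordMonomial {I : Type} [DecidableEq I] (w : FreeGroup I) :
    FreeAlgebra R (I ⊕ I) :=
  ((FreeGroup.toWord w).map
    (fun p => if p.2 then FreeAlgebra.ι R (Sum.inl p.1) else FreeAlgebra.ι R (Sum.inr p.1))).prod

/-- The relation on the free algebra imposing `x_i y_i = 1`, `y_i x_i = 1`, and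
`W(r) = 1` for each relator `r ∈ rels`. -/
noncomputable def presRel {I : Type} [DecidableEq I] (rels : Set (FreeGroup I)) :
    FreeAlgebra R (I ⊕ I) → FreeAlgebra R (I ⊕ I) → Prop := fun a b =>
  (∃ i : I, a = FreeAlgebra.ι R (Sum.inl i) * FreeAlgebra.ι R (Sum.inr i) ∧ b = 1) ∨
  (∃ i : I, a = FreeAlgebra.ι R (Sum.inr i) * FreeAlgebra.ι R (Sum.inl i) ∧ b = 1) ∨
  (∃ r ∈ rels, a = wordMonomial R r ∧ b = 1)

/-- The images of the generators `x_i` are units of the quotient. -/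
noncomputable def presUnit {I : Type} [DecidableEq I] (rels : Set (FreeGroup I)) (i : I) :
    (RingQuot (presRel R rels))ˣ where
  val := RingQuot.mkAlgHom R (presRel R rels) (FreeAlgebra.ι R (Sum.inl i))
  inv := RingQuot.mkAlgHom R (presRel R rels) (FreeAlgebra.ι R (Sum.inr i))
  val_inv := by
    rw [← map_mul, RingQuot.mkAlgHom_rel R (show presRel R rels _ _ from Or.inl ⟨i, rfl, rfl⟩), map_one]
  inv_val := by
    rw [← map_mul, RingQuot.mkAlgHom_rel R (show presRel R rels _ _ from Or.inr (Or.inl ⟨i, rfl, rfl⟩)), map_one]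

theorem lift_presUnit {I : Type} [DecidableEq I] (rels : Set (FreeGroup I)) (w : FreeGroup I) :
    ((FreeGroup.lift (presUnit R rels) w : (RingQuot (presRel R rels))ˣ) :
      RingQuot (presRel R rels)) =
      RingQuot.mkAlgHom R (presRel R rels) (wordMonomial R w) := by
  conv_lhs => rw [← FreeGroup.mk_toWord (x := w)]
  rw [FreeGroup.lift_mk, wordMonomial, map_list_prod, ← Units.coeHom_apply, map_list_prod,
    List.map_map, List.map_map]
  congr 1
  apply List.map_congr_left
  rintro ⟨i, b⟩ _
  cases b <;> rfl

theorem presUnit_rel {I : Type} [DecidableEq I] (rels : Set (FreeGroup I)) :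
    ∀ r ∈ rels, FreeGroup.lift (presUnit R rels) r = 1 := by
  intro r hr
  ext
  rw [lift_presUnit, RingQuot.mkAlgHom_rel R (show presRel R rels _ _ from Or.inr (Or.inr ⟨r, hr, rfl, rfl⟩)), map_one,
    Units.val_one]

/-- The algebra map from the free algebra to the group algebra. -/
noncomputable def toGA {I : Type} [DecidableEq I] (rels : Set (FreeGroup I)) :
    FreeAlgebra R (I ⊕ I) →ₐ[R] MonoidAlgebra R (PresentedGroup rels) :=
  FreeAlgebra.lift R (Sum.elim
    (fun i => MonoidAlgebra.of R (PresentedGroup rels) (PresentedGroup.of i))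
    (fun i => MonoidAlgebra.of R (PresentedGroup rels) (PresentedGroup.of i)⁻¹))

theorem toGA_wordMonomial {I : Type} [DecidableEq I] (rels : Set (FreeGroup I))
    (w : FreeGroup I) :
    toGA R rels (wordMonomial R w) =
      MonoidAlgebra.of R (PresentedGroup rels) (PresentedGroup.mk rels w) := by
  have hmk : PresentedGroup.mk rels w = FreeGroup.lift (fun i => (PresentedGroup.of i :
      PresentedGroup rels)) w := FreeGroup.lift_unique (f := fun i => (PresentedGroup.of i :
        PresentedGroup rels)) (PresentedGroup.mk rels) (fun x => rfl)
  rw [hmk]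
  conv_rhs => rw [← FreeGroup.mk_toWord (x := w)]
  rw [FreeGroup.lift_mk, wordMonomial, map_list_prod, map_list_prod, List.map_map, List.map_map]
  congr 1
  apply List.map_congr_left
  rintro ⟨i, b⟩ _
  cases b <;> simp [toGA, FreeAlgebra.lift_ι_apply]

theorem toGA_rel {I : Type} [DecidableEq I] (rels : Set (FreeGroup I)) :
    ∀ ⦃a b : FreeAlgebra R (I ⊕ I)⦄, presRel R rels a b → toGA R rels a = toGA R rels b := by
  rintro a b (⟨i, rfl, rfl⟩ | ⟨i, rfl, rfl⟩ | ⟨r, hr, rfl, rfl⟩)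
  · rw [map_mul, map_one]
    simp only [toGA, FreeAlgebra.lift_ι_apply, Sum.elim_inl, Sum.elim_inr]
    rw [← map_mul (MonoidAlgebra.of R (PresentedGroup rels)), mul_inv_cancel, map_one]
  · rw [map_mul, map_one]
    simp only [toGA, FreeAlgebra.lift_ι_apply, Sum.elim_inl, Sum.elim_inr]
    rw [← map_mul (MonoidAlgebra.of R (PresentedGroup rels)), inv_mul_cancel, map_one]
  · rw [toGA_wordMonomial, map_one]
    have : PresentedGroup.mk rels r = 1 :=
      (QuotientGroup.eq_one_iff r).2 (Subgroup.subset_normalClosure hr)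
    rw [this, map_one]

/-- For a presented group `G = F(a_i : i ∈ I)/⟨⟨rels⟩⟩`, the group
algebra `R[G]` is isomorphic, as an `R`-algebra, to the quotient of the free associative
algebra `T_R(x_i, y_i : i ∈ I)` by the two-sided ideal generated by the elements
`x_i y_i − 1`, `y_i x_i − 1` (`i ∈ I`) and `W(r) − 1` (`r ∈ rels`), via the isomorphism
sending the basis element corresponding to the image of `a_i` to the class of `x_i`. -/
theorem monoidAlgebra_presentedGroup {I : Type} [DecidableEq I]
    (rels : Set (FreeGroup I)) :
    ∃ e : MonoidAlgebra R (PresentedGroup rels) ≃ₐ[R] RingQuot (presRel R rels),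
      ∀ i : I, e (MonoidAlgebra.of R (PresentedGroup rels) (PresentedGroup.of i)) =
        RingQuot.mkAlgHom R (presRel R rels) (FreeAlgebra.ι R (Sum.inl i)) := by
  set G := PresentedGroup rels
  let F : MonoidAlgebra R G →ₐ[R] RingQuot (presRel R rels) :=
    MonoidAlgebra.lift R (RingQuot (presRel R rels)) G
      ((Units.coeHom _).comp (PresentedGroup.toGroup (presUnit_rel R rels)))
  let β : RingQuot (presRel R rels) →ₐ[R] MonoidAlgebra R G :=
    RingQuot.liftAlgHom R ⟨toGA R rels, toGA_rel R rels⟩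
  have hF : ∀ i : I, F (MonoidAlgebra.of R G (PresentedGroup.of i)) =
      RingQuot.mkAlgHom R (presRel R rels) (FreeAlgebra.ι R (Sum.inl i)) := by
    intro i
    simp only [F, MonoidAlgebra.lift_of, MonoidHom.comp_apply]
    rw [PresentedGroup.toGroup.of (presUnit_rel R rels)]
    rfl
  have hβmk : ∀ x, β (RingQuot.mkAlgHom R (presRel R rels) x) = toGA R rels x := fun x =>
    RingQuot.liftAlgHom_mkAlgHom_apply R _ _ x
  refine ⟨AlgEquiv.ofAlgHom F β ?_ ?_, hF⟩
  · apply RingQuot.ringQuot_ext'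
    apply FreeAlgebra.hom_ext
    funext p
    rcases p with i | i
    · simp only [Function.comp_apply, AlgHom.comp_apply, hβmk]
      rw [show toGA R rels (FreeAlgebra.ι R (Sum.inl i)) =
        MonoidAlgebra.of R G (PresentedGroup.of i) from FreeAlgebra.lift_ι_apply _ _, hF]
      rfl
    · simp only [Function.comp_apply, AlgHom.comp_apply, hβmk]
      rw [show toGA R rels (FreeAlgebra.ι R (Sum.inr i)) =
        MonoidAlgebra.of R G (PresentedGroup.of i)⁻¹ from FreeAlgebra.lift_ι_apply _ _]
      simp only [F, MonoidAlgebra.lift_of, MonoidHom.comp_apply]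
      rw [map_inv, PresentedGroup.toGroup.of]
      rfl
  · apply MonoidAlgebra.algHom_ext
    intro g
    induction g with
    | H z =>
      simp only [AlgHom.comp_apply, AlgHom.id_apply, ← MonoidAlgebra.of_apply]
      have h1 : F (MonoidAlgebra.of R G (PresentedGroup.mk rels z)) =
          ((FreeGroup.lift (presUnit R rels) z : (RingQuot (presRel R rels))ˣ) :
            RingQuot (presRel R rels)) := by
        simp only [F, MonoidAlgebra.lift_of, MonoidHom.comp_apply]
        rfl
      rw [h1, lift_presUnit, hβmk, toGA_wordMonomial]
    exact Subsingleton.elim _ _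
end

section
/- Let p be a prime, K a simplicial complex on [m], and ℤ_p^K the presented group with generators a_1,…,a_m and relations a_i^p = 1 for all i and a_i a_j = a_j a_i for every edge {i,j} ∈ K. Let A be the quotient of the free associative 𝔽_p-algebra T(u_1,…,u_m) by the two-sided ideal generated by the elements u_i^p for all i and u_i u_j − u_j u_i for all edges {i,j} ∈ K, and let ε′ : A → 𝔽_p be the algebra homomorphism determined by ε′(u_i) = 0 for all i. Then there is an 𝔽_p-algebra isomorphism Φ : A → 𝔽_p[ℤ_p^K] with Φ(u_i) = (basis element of a_i) − 1 for each i, and Φ intertwines the augmentations: ε ∘ Φ = ε′, where ε : 𝔽_p[ℤ_p^K] → 𝔽_p is the augmentation sending every group element to 1. -/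
/-- Relators of the graph product of cyclic groups of order `p`: `a_i^p = 1` and
`a_i a_j = a_j a_i` for edges `{i,j} ∈ K`. -/
def zpRels (p : ℕ) {m : ℕ} (K : Set (Finset (Fin m))) : Set (FreeGroup (Fin m)) :=
  {x | (∃ i : Fin m, x = FreeGroup.of i ^ p) ∨
    (∃ i j : Fin m, i ≠ j ∧ ({i, j} : Finset (Fin m)) ∈ K ∧
      x = FreeGroup.of i * FreeGroup.of j * (FreeGroup.of i)⁻¹ * (FreeGroup.of j)⁻¹)}

/-- The graph product `ℤ_p^K` of cyclic groups of order `p`. -/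
def ZpGraph (p : ℕ) {m : ℕ} (K : Set (Finset (Fin m))) : Type :=
  PresentedGroup (zpRels p K)

instance (p : ℕ) {m : ℕ} (K : Set (Finset (Fin m))) : Group (ZpGraph p K) :=
  inferInstanceAs (Group (PresentedGroup (zpRels p K)))

/-- The relation on the free associative `𝔽_p`-algebra imposing `u_i^p = 0` for all `i`
and `u_i u_j = u_j u_i` for all edges `{i,j} ∈ K`; its `RingQuot` is the quotient `A` of
the free algebra by the two-sided ideal generated by the `u_i^p` and
`u_i u_j − u_j u_i`. -/
def nilAlgRel (p : ℕ) {m : ℕ} (K : Set (Finset (Fin m))) :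
    FreeAlgebra (ZMod p) (Fin m) → FreeAlgebra (ZMod p) (Fin m) → Prop := fun a b =>
  (∃ i : Fin m, a = FreeAlgebra.ι (ZMod p) i ^ p ∧ b = 0) ∨
  (∃ i j : Fin m, i ≠ j ∧ ({i, j} : Finset (Fin m)) ∈ K ∧
    a = FreeAlgebra.ι (ZMod p) i * FreeAlgebra.ι (ZMod p) j ∧
    b = FreeAlgebra.ι (ZMod p) j * FreeAlgebra.ι (ZMod p) i)

/-- The augmentation `ε : 𝔽_p[G] → 𝔽_p`, the algebra homomorphism sending every group
element to `1`. -/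
noncomputable def augmentation (p : ℕ) (G : Type) [Group G] :
    MonoidAlgebra (ZMod p) G →ₐ[ZMod p] ZMod p :=
  MonoidAlgebra.lift (ZMod p) (ZMod p) G 1

section Aux
variable (p : ℕ) [Fact (Nat.Prime p)] {m : ℕ} (K : Set (Finset (Fin m)))

lemma zp_of_pow (i : Fin m) :
    (PresentedGroup.of (rels := zpRels p K) i) ^ p = 1 := by
  have h : FreeGroup.of i ^ p ∈ Subgroup.normalClosure (zpRels p K) :=
    Subgroup.subset_normalClosure (Or.inl ⟨i, rfl⟩)
  show (QuotientGroup.mk (FreeGroup.of i) : PresentedGroup (zpRels p K)) ^ p = 1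
  rw [← QuotientGroup.mk_pow]
  exact (QuotientGroup.eq_one_iff _).mpr h

lemma zp_of_comm {i j : Fin m} (hij : i ≠ j) (hK : ({i, j} : Finset (Fin m)) ∈ K) :
    Commute (PresentedGroup.of (rels := zpRels p K) i) (PresentedGroup.of (rels := zpRels p K) j) := by
  have h : FreeGroup.of i * FreeGroup.of j * (FreeGroup.of i)⁻¹ * (FreeGroup.of j)⁻¹
      ∈ Subgroup.normalClosure (zpRels p K) :=
    Subgroup.subset_normalClosure (Or.inr ⟨i, j, hij, hK, rfl⟩)
  have h1 : (PresentedGroup.of (rels := zpRels p K) i) * PresentedGroup.of j *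
      (PresentedGroup.of i)⁻¹ * (PresentedGroup.of j)⁻¹ = 1 :=
    (QuotientGroup.eq_one_iff _).mpr h
  exact commutatorElement_eq_one_iff_mul_comm.mp (by
    simpa [commutatorElement_def] using h1)
end Aux

section Aux2
variable (p : ℕ) [Fact (Nat.Prime p)] {m : ℕ} (K : Set (Finset (Fin m)))

instance : Nonempty (ZpGraph p K) := ⟨1⟩

instance : CharP (MonoidAlgebra (ZMod p) (ZpGraph p K)) p :=
  charP_of_injective_algebraMap (algebraMap (ZMod p) _).injective p

/-- The algebra hom `A → 𝔽_p[ℤ_p^K]`, `u_i ↦ a_i - 1`. -/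
noncomputable def zpPhi : RingQuot (nilAlgRel p K) →ₐ[ZMod p] MonoidAlgebra (ZMod p) (ZpGraph p K) :=
  RingQuot.liftAlgHom (ZMod p) ⟨FreeAlgebra.lift (ZMod p)
    (fun i => MonoidAlgebra.of (ZMod p) (ZpGraph p K) (PresentedGroup.of i) - 1), by
  rintro x y (⟨i, rfl, rfl⟩ | ⟨i, j, hij, hK, rfl, rfl⟩) <;>
    simp only [map_mul, map_pow, map_zero, FreeAlgebra.lift_ι_apply]
  · rw [sub_pow_char_of_commute p (Commute.one_right _), one_pow]
    exact sub_eq_zero.mpr (((MonoidAlgebra.of (ZMod p) (ZpGraph p K)).map_pow _ p).symm.trans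
      ((congrArg _ (zp_of_pow p K i)).trans (map_one _)))
  · have hc : (MonoidAlgebra.of (ZMod p) (ZpGraph p K) (PresentedGroup.of i)) *
        MonoidAlgebra.of (ZMod p) (ZpGraph p K) (PresentedGroup.of j) =
        MonoidAlgebra.of (ZMod p) (ZpGraph p K) (PresentedGroup.of j) *
        MonoidAlgebra.of (ZMod p) (ZpGraph p K) (PresentedGroup.of i) := by
      exact ((zp_of_comm p K hij hK).map (MonoidAlgebra.of (ZMod p) (ZpGraph p K))).eq
    simp only [mul_sub, sub_mul, one_mul, mul_one, hc]
    abel⟩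

lemma zpPhi_ι (i : Fin m) :
    zpPhi p K (RingQuot.mkAlgHom (ZMod p) (nilAlgRel p K) (FreeAlgebra.ι (ZMod p) i)) =
      MonoidAlgebra.of (ZMod p) (ZpGraph p K) (PresentedGroup.of i) - 1 := by
  rw [zpPhi, RingQuot.liftAlgHom_mkAlgHom_apply, FreeAlgebra.lift_ι_apply]

end Aux2

section Aux3
variable (p : ℕ) [Fact (Nat.Prime p)] {m : ℕ} (K : Set (Finset (Fin m)))
variable [Nontrivial (RingQuot (nilAlgRel p K))]

instance : CharP (RingQuot (nilAlgRel p K)) p :=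
  charP_of_injective_algebraMap (algebraMap (ZMod p) _).injective p

/-- abbreviation for the generators of `A`. -/
noncomputable def zpU (i : Fin m) : RingQuot (nilAlgRel p K) :=
  RingQuot.mkAlgHom (ZMod p) (nilAlgRel p K) (FreeAlgebra.ι (ZMod p) i)

lemma zpU_pow (i : Fin m) : zpU p K i ^ p = 0 := by
  rw [zpU, ← map_pow,
    RingQuot.mkAlgHom_rel (ZMod p) (s := nilAlgRel p K) (Or.inl ⟨i, rfl, rfl⟩), map_zero]

lemma zpU_comm {i j : Fin m} (hij : i ≠ j) (hK : ({i, j} : Finset (Fin m)) ∈ K) :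
    zpU p K i * zpU p K j = zpU p K j * zpU p K i := by
  rw [zpU, zpU, ← map_mul, ← map_mul,
    RingQuot.mkAlgHom_rel (ZMod p) (s := nilAlgRel p K) (Or.inr ⟨i, j, hij, hK, rfl, rfl⟩)]

lemma zpOneAdd_pow (i : Fin m) : (1 + zpU p K i) ^ p = 1 := by
  rw [add_pow_char_of_commute p (Commute.one_left _), one_pow, zpU_pow, add_zero]

/-- `1 + u_i` as a unit of `A`. -/
noncomputable def zpUnit (i : Fin m) : (RingQuot (nilAlgRel p K))ˣ where
  val := 1 + zpU p K i
  inv := (1 + zpU p K i) ^ (p - 1)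
  val_inv := by
    have hp1 : 1 + (p - 1) = p := Nat.add_sub_cancel' (Fact.out : p.Prime).one_le
    calc (1 + zpU p K i) * (1 + zpU p K i) ^ (p - 1)
        = (1 + zpU p K i) ^ (1 + (p - 1)) := by rw [pow_add, pow_one]
      _ = 1 := by rw [hp1, zpOneAdd_pow]
  inv_val := by
    have hp1 : (p - 1) + 1 = p := Nat.succ_pred_eq_of_pos (Fact.out : p.Prime).pos
    calc (1 + zpU p K i) ^ (p - 1) * (1 + zpU p K i)
        = (1 + zpU p K i) ^ ((p - 1) + 1) := by rw [pow_add, pow_one]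
      _ = 1 := by rw [hp1, zpOneAdd_pow]

lemma zpUnit_val (i : Fin m) : ↑(zpUnit p K i) = 1 + zpU p K i := rfl

lemma zpRels_lift : ∀ r ∈ zpRels p K, FreeGroup.lift (zpUnit p K) r = 1 := by
  rintro r (⟨i, rfl⟩ | ⟨i, j, hij, hK, rfl⟩)
  · rw [map_pow, FreeGroup.lift_apply_of]
    ext
    rw [Units.val_pow_eq_pow_val, Units.val_one, zpUnit_val]
    exact zpOneAdd_pow p K i
  · have hc : zpUnit p K i * zpUnit p K j = zpUnit p K j * zpUnit p K i := by
      ext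
      rw [Units.val_mul, Units.val_mul, zpUnit_val, zpUnit_val]
      simp only [mul_add, add_mul, mul_one, one_mul, zpU_comm p K hij hK]
      abel
    simp only [map_mul, map_inv, FreeGroup.lift_apply_of]
    rw [hc]
    group

/-- The group hom `ℤ_p^K → Aˣ`, `a_i ↦ 1 + u_i`. -/
noncomputable def zpTheta : ZpGraph p K →* (RingQuot (nilAlgRel p K))ˣ :=
  PresentedGroup.toGroup (zpRels_lift p K)

lemma zpTheta_of (i : Fin m) : zpTheta p K (PresentedGroup.of i) = zpUnit p K i :=
  PresentedGroup.toGroup.of (zpRels_lift p K)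

/-- The algebra hom `𝔽_p[ℤ_p^K] → A`. -/
noncomputable def zpPsi : MonoidAlgebra (ZMod p) (ZpGraph p K) →ₐ[ZMod p] RingQuot (nilAlgRel p K) :=
  MonoidAlgebra.lift (ZMod p) _ (ZpGraph p K) ((Units.coeHom _).comp (zpTheta p K))

lemma zpPsi_of (g : ZpGraph p K) :
    zpPsi p K (MonoidAlgebra.of (ZMod p) (ZpGraph p K) g) = ↑(zpTheta p K g) := by
  rw [zpPsi, MonoidAlgebra.lift_of]
  rfl

lemma zpPsi_of_of (i : Fin m) :
    zpPsi p K (MonoidAlgebra.of (ZMod p) (ZpGraph p K) (PresentedGroup.of i)) = 1 + zpU p K i := by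
  erw [zpPsi_of, zpTheta_of, zpUnit_val]
end Aux3

section Aux4
variable (p : ℕ) [Fact (Nat.Prime p)] {m : ℕ} (K : Set (Finset (Fin m)))
variable [Nontrivial (RingQuot (nilAlgRel p K))]

lemma zpPsi_comp_zpPhi :
    (zpPsi p K).comp (zpPhi p K) = AlgHom.id (ZMod p) (RingQuot (nilAlgRel p K)) := by
  apply RingQuot.ringQuot_ext'
  apply FreeAlgebra.hom_ext
  funext i
  show zpPsi p K (zpPhi p K (RingQuot.mkAlgHom (ZMod p) (nilAlgRel p K)
    (FreeAlgebra.ι (ZMod p) i))) = _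
  rw [zpPhi_ι, map_sub, map_one, zpPsi_of_of]
  show 1 + zpU p K i - 1 = zpU p K i
  abel

lemma zpPhi_comp_zpPsi :
    (zpPhi p K).comp (zpPsi p K) = AlgHom.id (ZMod p) (MonoidAlgebra (ZMod p) (ZpGraph p K)) := by
  set F₁ : ZpGraph p K →* MonoidAlgebra (ZMod p) (ZpGraph p K) :=
    ((zpPhi p K).toRingHom.toMonoidHom).comp ((Units.coeHom _).comp (zpTheta p K)) with hF₁
  have h2 : F₁.toHomUnits = (MonoidAlgebra.of (ZMod p) (ZpGraph p K)).toHomUnits := by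
    apply PresentedGroup.ext (rels := zpRels p K)
    intro x
    apply Units.ext
    erw [MonoidHom.coe_toHomUnits, MonoidHom.coe_toHomUnits]
    show zpPhi p K ↑(zpTheta p K (PresentedGroup.of x)) = _
    rw [zpTheta_of, zpUnit_val, map_add, map_one]
    show 1 + zpPhi p K (RingQuot.mkAlgHom (ZMod p) (nilAlgRel p K)
      (FreeAlgebra.ι (ZMod p) x)) = _
    rw [zpPhi_ι]
    abel
  have key : ∀ g, F₁ g = MonoidAlgebra.of (ZMod p) (ZpGraph p K) g := fun g =>
    calc F₁ g = ↑(F₁.toHomUnits g) := (MonoidHom.coe_toHomUnits _ _).symm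
      _ = ↑((MonoidAlgebra.of (ZMod p) (ZpGraph p K)).toHomUnits g) := by rw [h2]
      _ = MonoidAlgebra.of (ZMod p) (ZpGraph p K) g := MonoidHom.coe_toHomUnits _ _
  apply MonoidAlgebra.algHom_ext
  intro g
  show zpPhi p K (zpPsi p K (MonoidAlgebra.single g 1)) = MonoidAlgebra.single g 1
  have hsingle : (MonoidAlgebra.single g 1 : MonoidAlgebra (ZMod p) (ZpGraph p K)) =
      MonoidAlgebra.of (ZMod p) (ZpGraph p K) g := rfl
  rw [hsingle, zpPsi_of]
  exact key g
  exact Subsingleton.elim _ _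

end Aux4
/-- Let `A = T(u_1,…,u_m)/(u_i^p, u_iu_j − u_ju_i for {i,j} ∈ K)` with
augmentation `ε′` determined by `ε′(u_i) = 0`.  Then there is an `𝔽_p`-algebra
isomorphism `Φ : A → 𝔽_p[ℤ_p^K]` with `Φ(u_i) = a_i − 1`, and `Φ` intertwines the
augmentations: `ε ∘ Φ = ε′`. -/
theorem nilAlg_iso_groupAlgebra (p : ℕ) (hp : p.Prime) {m : ℕ}
    (K : Set (Finset (Fin m)))
    (hdown : ∀ I ∈ K, ∀ J ⊆ I, J ∈ K) (hempty : ∅ ∈ K)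
    (hsingle : ∀ i : Fin m, ({i} : Finset (Fin m)) ∈ K)
    (ε' : RingQuot (nilAlgRel p K) →ₐ[ZMod p] ZMod p)
    (hε' : ∀ i : Fin m, ε' (RingQuot.mkAlgHom (ZMod p) (nilAlgRel p K)
      (FreeAlgebra.ι (ZMod p) i)) = 0) :
    ∃ Φ : RingQuot (nilAlgRel p K) ≃ₐ[ZMod p] MonoidAlgebra (ZMod p) (ZpGraph p K),
      (∀ i : Fin m, Φ (RingQuot.mkAlgHom (ZMod p) (nilAlgRel p K)
          (FreeAlgebra.ι (ZMod p) i)) =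
        MonoidAlgebra.of (ZMod p) (ZpGraph p K) (PresentedGroup.of i) - 1) ∧
      (augmentation p (ZpGraph p K)).comp Φ.toAlgHom = ε' := by
  haveI : Fact p.Prime := ⟨hp⟩
  haveI : Nontrivial (RingQuot (nilAlgRel p K)) := ε'.toRingHom.domain_nontrivial
  refine ⟨AlgEquiv.ofAlgHom (zpPhi p K) (zpPsi p K)
    (zpPhi_comp_zpPsi p K) (zpPsi_comp_zpPhi p K), fun i => zpPhi_ι p K i, ?_⟩
  apply RingQuot.ringQuot_ext'
  apply FreeAlgebra.hom_ext
  funext i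
  show augmentation p (ZpGraph p K) (zpPhi p K (RingQuot.mkAlgHom (ZMod p) (nilAlgRel p K)
    (FreeAlgebra.ι (ZMod p) i))) = ε' (RingQuot.mkAlgHom (ZMod p) (nilAlgRel p K)
      (FreeAlgebra.ι (ZMod p) i))
  rw [zpPhi_ι, map_sub, map_one, hε']
  show augmentation p (ZpGraph p K) (MonoidAlgebra.of (ZMod p) (ZpGraph p K)
    (PresentedGroup.of i)) - 1 = 0
  erw [augmentation, MonoidAlgebra.lift_of]
  exact sub_self _
end
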